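/- arXiv:1409.0083 — 2 statements merged into one kernel-verified Lean document; each statement's English description precedes it below -/
import Mathlib

section
/- For symmetric positive definite matrices A and B, the matrix G = A^{1/2}(A^{-1/2} B A^{-1/2})^{1/2} A^{1/2} (the Riemannian geometric mean of A and B) satisfies the Riccati equation G(A⁻¹ + B⁻¹)G = A + B. Consequently, G is a critical point of X ↦ J(X,A) + J(X,B), i.e., the geometric mean under the Jeffrey divergence coincides with the geometric mean under the affine invariant Riemannian metric. -/
open Matrix

/-- The Riemannian geometric mean `G = A^{1/2}(A^{-1/2} B A^{-1/2})^{1/2} A^{1/2}`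
satisfies the Riccati equation `G(A⁻¹ + B⁻¹)G = A + B`, hence it is a critical
point of `X ↦ J(X,A) + J(X,B)` (whose gradient is
`(1/2)(A⁻¹ + B⁻¹ - X⁻¹(A+B)X⁻¹)`). Here `Ah` is the unique SPD square root of
`A` and `M` that of `A^{-1/2} B A^{-1/2}`. -/
theorem geometric_mean_jeffrey_eq_airm {n : ℕ} {A B : Matrix (Fin n) (Fin n) ℝ}
    (hA : A.PosDef) (hB : B.PosDef)
    (Ah : Matrix (Fin n) (Fin n) ℝ) (hAh : Ah.PosDef) (hAh2 : Ah * Ah = A)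
    (M : Matrix (Fin n) (Fin n) ℝ) (hM : M.PosDef)
    (hM2 : M * M = Ah⁻¹ * B * Ah⁻¹) :
    (Ah * M * Ah) * (A⁻¹ + B⁻¹) * (Ah * M * Ah) = A + B ∧
    ((1:ℝ)/2) • (A⁻¹ + B⁻¹ - (Ah * M * Ah)⁻¹ * (A + B) * (Ah * M * Ah)⁻¹) = 0 := by
  haveI : Invertible Ah := hAh.isUnit.invertible
  haveI : Invertible M := hM.isUnit.invertible
  have hAinv : A⁻¹ = Ah⁻¹ * Ah⁻¹ := by rw [← hAh2, Matrix.mul_inv_rev]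
  have hB' : B = Ah * (M * M) * Ah := by
    rw [hM2]
    simp only [Matrix.mul_assoc, Matrix.inv_mul_of_invertible, Matrix.mul_one,
      Matrix.mul_inv_cancel_left_of_invertible]
  have hBinv : B⁻¹ = Ah⁻¹ * (M⁻¹ * M⁻¹) * Ah⁻¹ := by
    rw [hB', Matrix.mul_inv_rev, Matrix.mul_inv_rev, Matrix.mul_inv_rev]
    simp only [Matrix.mul_assoc]
  have h1 : (Ah * M * Ah) * (A⁻¹ + B⁻¹) * (Ah * M * Ah) = A + B := by
    rw [hAinv, hBinv]
    rw [Matrix.mul_add, Matrix.add_mul]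
    have t1 : Ah * M * Ah * (Ah⁻¹ * Ah⁻¹) * (Ah * M * Ah) = B := by
      rw [hB']
      simp only [Matrix.mul_assoc, Matrix.mul_inv_cancel_left_of_invertible,
        Matrix.inv_mul_cancel_left_of_invertible]
    have t2 : Ah * M * Ah * (Ah⁻¹ * (M⁻¹ * M⁻¹) * Ah⁻¹) * (Ah * M * Ah) = A := by
      rw [← hAh2]
      simp only [Matrix.mul_assoc, Matrix.mul_inv_cancel_left_of_invertible,
        Matrix.inv_mul_cancel_left_of_invertible]
    rw [t1, t2, add_comm]
  refine ⟨h1, ?_⟩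
  haveI : Invertible (Ah * M) := invertibleMul _ _
  haveI : Invertible (Ah * M * Ah) := invertibleMul _ _
  set G := Ah * M * Ah with hG
  rw [← h1, Matrix.mul_assoc G (A⁻¹ + B⁻¹) G, Matrix.inv_mul_cancel_left_of_invertible,
    Matrix.mul_inv_cancel_right_of_invertible, sub_self, smul_zero]
end

section
/- The Riccati equation X A X = B in the unknown symmetric positive definite matrix X, where A and B are symmetric positive definite n×n matrices, has exactly one symmetric positive definite solution. -/
open Matrix
open scoped MatrixOrder

private lemma posDef_conj {n : ℕ} {A : Matrix (Fin n) (Fin n) ℝ} (hA : A.PosDef)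
    {C : Matrix (Fin n) (Fin n) ℝ} (hC : IsUnit C) : (Cᴴ * A * C).PosDef := by
  refine PosDef.of_dotProduct_mulVec_pos (isHermitian_conjTranspose_mul_mul C hA.1) fun x hx => ?_
  have hCx : C *ᵥ x ≠ 0 := by
    intro h
    exact hx <| (Matrix.mulVec_injective_iff_isUnit.mpr hC) (by simpa using h)
  simpa only [star_mulVec, dotProduct_mulVec, vecMul_vecMul] using hA.dotProduct_mulVec_pos hCx

private lemma posDef_sqrt {n : ℕ} {A : Matrix (Fin n) (Fin n) ℝ} (hA : A.PosDef) :
    (CFC.sqrt A).PosDef := by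
  set S := CFC.sqrt A with hS
  refine PosDef.of_dotProduct_mulVec_pos (CFC.sqrt_nonneg A).posSemidef.1 fun x hx => ?_
  rcases lt_or_eq_of_le ((CFC.sqrt_nonneg A).posSemidef.dotProduct_mulVec_nonneg x) with h | h
  · exact h
  · exfalso
    have hSx : S *ᵥ x = 0 :=
      (Matrix.PosSemidef.dotProduct_mulVec_zero_iff (CFC.sqrt_nonneg A).posSemidef x).mp h.symm
    have hAx : A *ᵥ x = 0 := by
      rw [← CFC.sqrt_mul_sqrt_self A hA.posSemidef.nonneg, ← Matrix.mulVec_mulVec, hSx, Matrix.mulVec_zero]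
    have := hA.dotProduct_mulVec_pos hx
    rw [hAx] at this
    simp at this

theorem riccati_exists_unique {n : ℕ} {A B : Matrix (Fin n) (Fin n) ℝ}
    (hA : A.PosDef) (hB : B.PosDef) :
    ∃! X : Matrix (Fin n) (Fin n) ℝ, X.PosDef ∧ X * A * X = B := by
  set S := CFC.sqrt A with hSdef
  have hS : S.PosDef := posDef_sqrt hA
  have hSS : S * S = A := CFC.sqrt_mul_sqrt_self A hA.posSemidef.nonneg
  have hSH : Sᴴ = S := (CFC.sqrt_nonneg A).posSemidef.1
  have hSu : IsUnit S := hS.isUnit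
  have hSiS : S⁻¹ * S = 1 := nonsing_inv_mul _ (isUnit_iff_isUnit_det _ |>.mp hSu)
  have hSSi : S * S⁻¹ = 1 := mul_nonsing_inv _ (isUnit_iff_isUnit_det _ |>.mp hSu)
  have hSi : (S⁻¹).PosDef := hS.inv
  have hSiH : (S⁻¹)ᴴ = S⁻¹ := hSi.1
  have hSiu : IsUnit (S⁻¹) := hSi.isUnit
  have hM : (Sᴴ * B * S).PosDef := posDef_conj hB hSu
  rw [hSH] at hM
  set T := CFC.sqrt (S * B * S) with hTdef
  have hT : T.PosDef := posDef_sqrt hM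
  have hTT : T * T = S * B * S := CFC.sqrt_mul_sqrt_self (S * B * S) hM.posSemidef.nonneg
  set X := S⁻¹ * T * S⁻¹ with hXdef
  have hX : X.PosDef := by
    have := posDef_conj hT hSiu
    rwa [hSiH] at this
  have hXeq : X * A * X = B := by
    rw [hXdef, ← hSS]
    calc S⁻¹ * T * S⁻¹ * (S * S) * (S⁻¹ * T * S⁻¹)
        = S⁻¹ * (T * ((S⁻¹ * S) * (S * S⁻¹)) * T) * S⁻¹ := by noncomm_ring
      _ = S⁻¹ * (T * T) * S⁻¹ := by rw [hSiS, hSSi]; simp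
      _ = S⁻¹ * (S * B * S) * S⁻¹ := by rw [hTT]
      _ = (S⁻¹ * S) * B * (S * S⁻¹) := by noncomm_ring
      _ = B := by rw [hSiS, hSSi]; simp
  refine ⟨X, ⟨hX, hXeq⟩, ?_⟩
  rintro Y ⟨hY, hYeq⟩
  have hC : (Sᴴ * Y * S).PosDef := posDef_conj hY hSu
  rw [hSH] at hC
  have hCsq : (S * Y * S) ^ 2 = S * B * S := by
    rw [← hYeq, ← hSS]
    rw [pow_two]; noncomm_ring
  have hCT : S * Y * S = T :=
    (CFC.sqrt_unique (by rw [← hCsq, pow_two]) hC.posSemidef.nonneg).symm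
  calc Y = (S⁻¹ * S) * Y * (S * S⁻¹) := by rw [hSiS, hSSi]; simp
    _ = S⁻¹ * (S * Y * S) * S⁻¹ := by noncomm_ring
    _ = X := by rw [hCT]
end
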